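/- In the two-candidate P_2-voter model, if p̂_{22}/p̂_{21} < (p_{22}/p_{21})·((1/2 − ε)/(1/2 + ε)), then there exists N such that for all n ≥ N, P(Z > 0) ≥ 1 − 2·exp(−2·(p̂_{22}·p̂_{21}/(p̂_{22} + p̂_{21}))²·√n); i.e., a voter of class P_2 perceives a_2 as winner (and hence is surprised when a_1 truly wins) with probability tending to 1 as n → ∞. -/

import Mathlib

open MeasureTheory ProbabilityTheory

/-- Two-candidate model, voter `v ∈ P₂`.  `Y i` are i.i.d. with
`P(Y i = 1/p̂₂₂) = (1/2 - ε) p₂₂`, `P(Y i = -1/p̂₂₁) = (1/2 + ε) p₂₁`, and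
`P(Y i = 0)` the remaining mass; `Z = 1 + ∑_{i<n-1} Y i`.  If
`p̂₂₂/p̂₂₁ < (p₂₂/p₂₁)·((1/2-ε)/(1/2+ε))` then there is `N` such that for all
`n ≥ N`, `P(Z > 0) ≥ 1 - 2 exp(-2 (p̂₂₂ p̂₂₁/(p̂₂₂+p̂₂₁))² √n)`. -/
theorem surprise_two_candidates_P2_surprised
    {Ω : Type*} [MeasurableSpace Ω] (μ : Measure Ω) [IsProbabilityMeasure μ]
    (ε : ℝ) (hε : 0 < ε) (hε' : ε < 1/2)
    (p22 p21 phat22 phat21 : ℝ)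
    (hp22 : 0 < p22) (hp22' : p22 ≤ 1) (hp21 : 0 < p21) (hp21' : p21 ≤ 1)
    (hphat22 : 0 < phat22) (hphat22' : phat22 ≤ 1)
    (hphat21 : 0 < phat21) (hphat21' : phat21 ≤ 1)
    (Y : ℕ → Ω → ℝ) (hmeas : ∀ i, Measurable (Y i))
    (hindep : iIndepFun Y μ)
    (hY1 : ∀ i, μ {ω | Y i ω = 1/phat22} = ENNReal.ofReal ((1/2 - ε) * p22))
    (hY2 : ∀ i, μ {ω | Y i ω = -1/phat21} = ENNReal.ofReal ((1/2 + ε) * p21))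
    (hY0 : ∀ i, μ {ω | Y i ω = 0} =
      ENNReal.ofReal (1 - (1/2 - ε) * p22 - (1/2 + ε) * p21))
    (hcond : phat22 / phat21 < (p22 / p21) * ((1/2 - ε) / (1/2 + ε))) :
    ∃ N : ℕ, ∀ n : ℕ, N ≤ n →
      μ {ω | 0 < 1 + ∑ i ∈ Finset.range (n - 1), Y i ω} ≥
        ENNReal.ofReal
          (1 - 2 * Real.exp (-2 * (phat22 * phat21 / (phat22 + phat21))^2 * Real.sqrt n)) := by
  classical
  set a : ℝ := (1/2 - ε) * p22 with ha_def
  set b : ℝ := (1/2 + ε) * p21 with hb_def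
  have ha : 0 < a := mul_pos (by linarith) hp22
  have hb : 0 < b := mul_pos (by linarith) hp21
  set c₁ : ℝ := 1/phat22 with hc1_def
  set c₂ : ℝ := -1/phat21 with hc2_def
  have hc1 : 0 < c₁ := by rw [hc1_def]; positivity
  have hc2 : c₂ < 0 := by
    rw [hc2_def]
    exact div_neg_of_neg_of_pos (by norm_num) hphat21
  have hc12 : c₁ ≠ c₂ := by intro h; rw [h] at hc1; linarith
  have hc10 : c₁ ≠ 0 := ne_of_gt hc1
  have hc20 : c₂ ≠ 0 := ne_of_lt hc2
  -- measurability of the three events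
  have hmA : ∀ i, MeasurableSet {ω | Y i ω = c₁} :=
    fun i => measurableSet_eq_fun (hmeas i) measurable_const
  have hmB : ∀ i, MeasurableSet {ω | Y i ω = c₂} :=
    fun i => measurableSet_eq_fun (hmeas i) measurable_const
  have hmC : ∀ i, MeasurableSet {ω | Y i ω = 0} :=
    fun i => measurableSet_eq_fun (hmeas i) measurable_const
  have hdAB : ∀ i, Disjoint {ω | Y i ω = c₁} {ω | Y i ω = c₂} := by
    intro i
    rw [Set.disjoint_left]
    intro ω h1 h2
    rw [Set.mem_setOf_eq] at h1 h2
    exact hc12 (h1 ▸ h2)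
  have hdAC : ∀ i, Disjoint {ω | Y i ω = c₁} {ω | Y i ω = 0} := by
    intro i
    rw [Set.disjoint_left]
    intro ω h1 h2
    rw [Set.mem_setOf_eq] at h1 h2
    exact hc10 (h1 ▸ h2)
  have hdBC : ∀ i, Disjoint {ω | Y i ω = c₂} {ω | Y i ω = 0} := by
    intro i
    rw [Set.disjoint_left]
    intro ω h1 h2
    rw [Set.mem_setOf_eq] at h1 h2
    exact hc20 (h1 ▸ h2)
  -- total mass considerations
  have hab1 : a + b ≤ 1 := by
    have h := measure_union (μ := μ) (hdAB 0) (hmB 0)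
    have hle : μ ({ω | Y 0 ω = c₁} ∪ {ω | Y 0 ω = c₂}) ≤ 1 := prob_le_one
    rw [h, hY1 0, hY2 0, ← ENNReal.ofReal_add ha.le hb.le] at hle
    exact ENNReal.ofReal_le_one.mp hle
  have hc0 : 0 ≤ 1 - a - b := by linarith
  have hD : ∀ i, μ ({ω | Y i ω = c₁} ∪ {ω | Y i ω = c₂} ∪ {ω | Y i ω = 0}) = 1 := by
    intro i
    have hd : Disjoint ({ω | Y i ω = c₁} ∪ {ω | Y i ω = c₂}) {ω | Y i ω = 0} :=
      Set.disjoint_union_left.mpr ⟨hdAC i, hdBC i⟩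
    rw [measure_union hd (hmC i), measure_union (hdAB i) (hmB i), hY1 i, hY2 i, hY0 i,
      ← ENNReal.ofReal_add ha.le hb.le, ← ENNReal.ofReal_add (by linarith) hc0]
    have : a + b + (1 - a - b) = 1 := by ring
    rw [this, ENNReal.ofReal_one]
  have hDc : ∀ i, μ ({ω | Y i ω = c₁} ∪ {ω | Y i ω = c₂} ∪ {ω | Y i ω = 0})ᶜ = 0 := by
    intro i
    rw [measure_compl (((hmA i).union (hmB i)).union (hmC i)) (measure_ne_top _ _), hD i,
      measure_univ, tsub_self]
  -- the moment generating function of each Y i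
  set G : ℝ → ℝ := fun t => a * Real.exp (t * c₁) + b * Real.exp (t * c₂) + (1 - a - b)
    with hG_def
  have hmgf : ∀ (t : ℝ) (i : ℕ),
      Integrable (fun ω => Real.exp (t * Y i ω)) μ ∧ mgf (Y i) μ t = G t := by
    intro t i
    have int1 : Integrable ({ω | Y i ω = c₁}.indicator fun _ => Real.exp (t * c₁)) μ :=
      (integrable_const _).indicator (hmA i)
    have int2 : Integrable ({ω | Y i ω = c₂}.indicator fun _ => Real.exp (t * c₂)) μ :=
      (integrable_const _).indicator (hmB i)
    have int3 : Integrable ({ω | Y i ω = 0}.indicator fun _ => (1:ℝ)) μ :=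
      (integrable_const _).indicator (hmC i)
    have hmem : ∀ᵐ ω ∂μ, ω ∈ {ω | Y i ω = c₁} ∪ {ω | Y i ω = c₂} ∪ {ω | Y i ω = 0} :=
      mem_ae_iff.mpr (hDc i)
    have hae : (fun ω => Real.exp (t * Y i ω)) =ᵐ[μ]
        (fun ω => {ω | Y i ω = c₁}.indicator (fun _ => Real.exp (t * c₁)) ω
          + {ω | Y i ω = c₂}.indicator (fun _ => Real.exp (t * c₂)) ω
          + {ω | Y i ω = 0}.indicator (fun _ => (1:ℝ)) ω) := by
      filter_upwards [hmem] with ω hω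
      rcases hω with (h1 | h1) | h1
      · have hy : Y i ω = c₁ := h1
        have h2 : ω ∉ {ω | Y i ω = c₂} := by
          intro h; rw [Set.mem_setOf_eq, hy] at h; exact hc12 h
        have h3 : ω ∉ {ω | Y i ω = 0} := by
          intro h; rw [Set.mem_setOf_eq, hy] at h; exact hc10 h
        rw [Set.indicator_of_mem h1, Set.indicator_of_notMem h2, Set.indicator_of_notMem h3,
          hy]
        ring
      · have hy : Y i ω = c₂ := h1
        have h2 : ω ∉ {ω | Y i ω = c₁} := by
          intro h; rw [Set.mem_setOf_eq, hy] at h; exact hc12 h.symm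
        have h3 : ω ∉ {ω | Y i ω = 0} := by
          intro h; rw [Set.mem_setOf_eq, hy] at h; exact hc20 h
        rw [Set.indicator_of_mem h1, Set.indicator_of_notMem h2, Set.indicator_of_notMem h3,
          hy]
        ring
      · have hy : Y i ω = 0 := h1
        have h2 : ω ∉ {ω | Y i ω = c₁} := by
          intro h; rw [Set.mem_setOf_eq, hy] at h; exact hc10 h.symm
        have h3 : ω ∉ {ω | Y i ω = c₂} := by
          intro h; rw [Set.mem_setOf_eq, hy] at h; exact hc20 h.symm
        rw [Set.indicator_of_mem h1, Set.indicator_of_notMem h2, Set.indicator_of_notMem h3,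
          hy]
        simp
    have hint : Integrable (fun ω => Real.exp (t * Y i ω)) μ :=
      ((int1.add int2).add int3).congr hae.symm
    refine ⟨hint, ?_⟩
    have int12 : Integrable (fun ω => {ω | Y i ω = c₁}.indicator (fun _ => Real.exp (t * c₁)) ω
        + {ω | Y i ω = c₂}.indicator (fun _ => Real.exp (t * c₂)) ω) μ := int1.add int2
    have : mgf (Y i) μ t = ∫ ω, Real.exp (t * Y i ω) ∂μ := rfl
    rw [this, integral_congr_ae hae, integral_add int12 int3,
      integral_add int1 int2, integral_indicator_const _ (hmA i),
      integral_indicator_const _ (hmB i), integral_indicator_const _ (hmC i),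
      measureReal_def, measureReal_def, measureReal_def,
      hY1 i, hY2 i, hY0 i, ENNReal.toReal_ofReal ha.le, ENNReal.toReal_ofReal hb.le,
      ENNReal.toReal_ofReal hc0]
    simp only [hG_def, smul_eq_mul]
    ring
  -- derivative of G at 0 is positive
  have hm : 0 < a * c₁ + b * c₂ := by
    have h1 : phat22 * (p21 * (1/2 + ε)) < p22 * (1/2 - ε) * phat21 := by
      rw [div_mul_div_comm, div_lt_div_iff₀ hphat21 (by positivity)] at hcond
      linarith
    have h2 : b / phat21 < a / phat22 := by
      rw [div_lt_div_iff₀ hphat21 hphat22, ha_def, hb_def]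
      nlinarith
    have e1 : a * c₁ = a / phat22 := by rw [hc1_def]; ring
    have e2 : b * c₂ = -(b / phat21) := by rw [hc2_def]; ring
    rw [e1, e2]
    linarith
  have hG1 : HasDerivAt (fun s : ℝ => Real.exp (s * c₁)) c₁ 0 := by
    have h := ((hasDerivAt_id (0:ℝ)).mul_const c₁).exp
    simpa using h
  have hG2 : HasDerivAt (fun s : ℝ => Real.exp (s * c₂)) c₂ 0 := by
    have h := ((hasDerivAt_id (0:ℝ)).mul_const c₂).exp
    simpa using h
  have hGd : HasDerivAt G (a * c₁ + b * c₂) 0 := by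
    have h := ((hG1.const_mul a).add (hG2.const_mul b)).add_const (1 - a - b)
    simpa [hG_def] using h
  have hG0 : G 0 = 1 := by
    simp only [hG_def, zero_mul, Real.exp_zero, mul_one]
    ring
  -- find u < 0 with G u < 1
  obtain ⟨u, hu_neg, hu_lt⟩ : ∃ u : ℝ, u < 0 ∧ G u < 1 := by
    have hslope := hasDerivAt_iff_tendsto_slope.mp hGd
    have hmono : nhdsWithin (0:ℝ) (Set.Iio 0) ≤ nhdsWithin (0:ℝ) {(0:ℝ)}ᶜ :=
      nhdsWithin_mono 0 (fun x hx => ne_of_lt hx)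
    have hslope' : Filter.Tendsto (slope G 0) (nhdsWithin (0:ℝ) (Set.Iio 0))
        (nhds (a * c₁ + b * c₂)) := hslope.mono_left hmono
    have hev : ∀ᶠ v in nhdsWithin (0:ℝ) (Set.Iio 0), 0 < slope G 0 v :=
      hslope'.eventually_const_lt hm
    have hev2 : ∀ᶠ v in nhdsWithin (0:ℝ) (Set.Iio 0), v < 0 :=
      eventually_mem_nhdsWithin
    obtain ⟨v, h1, h2⟩ := (hev.and hev2).exists
    refine ⟨v, h2, ?_⟩
    rw [slope_def_field, hG0, sub_zero] at h1
    rcases div_pos_iff.mp h1 with ⟨hp, hq⟩ | ⟨hp, hq⟩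
    · linarith
    · linarith
  set q : ℝ := G u with hq_def
  have hq0 : 0 ≤ q := by
    simp only [hq_def, hG_def]
    have e1 := Real.exp_pos (u * c₁)
    have e2 := Real.exp_pos (u * c₂)
    nlinarith
  set δ : ℝ := 1 - q with hδ_def
  have hδ : 0 < δ := by rw [hδ_def]; linarith
  set cst : ℝ := phat22 * phat21 / (phat22 + phat21) with hcst_def
  clear_value a b c₁ c₂ G q δ cst
  refine ⟨max 2 (⌈(4 * cst^2 / δ)^2⌉₊ + 1), fun n hn => ?_⟩
  have hn2 : 2 ≤ n := le_trans (le_max_left _ _) hn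
  have hnK : (4 * cst^2 / δ)^2 ≤ (n : ℝ) := by
    have h1 : ⌈(4 * cst^2 / δ)^2⌉₊ ≤ n := by
      have := le_trans (le_max_right 2 (⌈(4 * cst^2 / δ)^2⌉₊ + 1)) hn
      omega
    exact Nat.ceil_le.mp h1
  set k : ℕ := n - 1 with hk_def
  have hkval : (k : ℝ) = (n : ℝ) - 1 := by
    rw [hk_def, Nat.cast_sub (by omega), Nat.cast_one]
  -- Chernoff bound
  have hint : ∀ i ∈ Finset.range k, Integrable (fun ω => Real.exp (u * Y i ω)) μ :=
    fun i _ => (hmgf u i).1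
  have hSint : Integrable (fun ω => Real.exp (u * (∑ i ∈ Finset.range k, Y i) ω)) μ :=
    hindep.integrable_exp_mul_sum hmeas hint
  have chern := measure_le_le_exp_mul_mgf (μ := μ) (X := ∑ i ∈ Finset.range k, Y i)
    (-1 : ℝ) hu_neg.le hSint
  have hmgfS : mgf (∑ i ∈ Finset.range k, Y i) μ u = q ^ k := by
    rw [hindep.mgf_sum hmeas]
    rw [Finset.prod_congr rfl (fun i _ => (hmgf u i).2), Finset.prod_const, Finset.card_range,
      hq_def]
  rw [hmgfS] at chern
  -- the real bound
  have hreal : (μ {ω | (∑ i ∈ Finset.range k, Y i) ω ≤ -1}).toReal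
      ≤ 2 * Real.exp (-2 * cst^2 * Real.sqrt n) := by
    have e0 : Real.exp (-u * -1) ≤ 1 := by
      have hμ1 : -u * -1 = u := by ring
      rw [hμ1]
      have : Real.exp u ≤ Real.exp 0 := Real.exp_le_exp.mpr hu_neg.le
      simpa using this
    have e2 : q ≤ Real.exp (-δ) := by
      have h := Real.add_one_le_exp (-δ)
      have hd : δ = 1 - q := hδ_def
      linarith
    have e3 : q ^ k ≤ Real.exp (-δ) ^ k := pow_le_pow_left₀ hq0 e2 k
    have e4 : Real.exp (-δ) ^ k = Real.exp (-(δ * k)) := by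
      rw [← Real.exp_nat_mul]
      congr 1
      ring
    have hsqrt_nn : (0:ℝ) ≤ Real.sqrt n := Real.sqrt_nonneg _
    have hss : Real.sqrt n * Real.sqrt n = (n:ℝ) := Real.mul_self_sqrt (Nat.cast_nonneg n)
    have h4c : 4 * cst^2 ≤ Real.sqrt n * δ := by
      have h1 : 4 * cst^2 / δ ≤ Real.sqrt n := by
        have h2 : 0 ≤ 4 * cst^2 / δ := by positivity
        have h3 : Real.sqrt ((4 * cst^2 / δ)^2) ≤ Real.sqrt n := Real.sqrt_le_sqrt hnK
        rwa [Real.sqrt_sq h2] at h3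
      rwa [div_le_iff₀ hδ] at h1
    have hcore : 2 * cst^2 * Real.sqrt n ≤ δ * ((n:ℝ) - 1) := by
      have h5 : 4 * cst^2 * Real.sqrt n ≤ δ * n :=
        calc 4 * cst^2 * Real.sqrt n ≤ (Real.sqrt n * δ) * Real.sqrt n :=
              mul_le_mul_of_nonneg_right h4c hsqrt_nn
          _ = δ * (Real.sqrt n * Real.sqrt n) := by ring
          _ = δ * n := by rw [hss]
      have hn2' : (2:ℝ) ≤ (n:ℝ) := by exact_mod_cast hn2
      have h9 : 0 ≤ δ * ((n:ℝ)/2 - 1) := mul_nonneg hδ.le (by linarith)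
      have h10 : δ * ((n:ℝ) - 1) - δ * (n:ℝ) / 2 = δ * ((n:ℝ)/2 - 1) := by ring
      linarith
    have e5 : Real.exp (-(δ * k)) ≤ Real.exp (-2 * cst^2 * Real.sqrt n) := by
      apply Real.exp_le_exp.mpr
      rw [hkval]
      linarith
    calc (μ {ω | (∑ i ∈ Finset.range k, Y i) ω ≤ -1}).toReal
        ≤ Real.exp (-u * -1) * q ^ k := chern
      _ ≤ 1 * (Real.exp (-δ) ^ k) := by
          apply mul_le_mul e0 e3 (pow_nonneg hq0 k) (by norm_num)
      _ = Real.exp (-(δ * k)) := by rw [one_mul, e4]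
      _ ≤ Real.exp (-2 * cst^2 * Real.sqrt n) := e5
      _ ≤ 2 * Real.exp (-2 * cst^2 * Real.sqrt n) := by
          linarith [Real.exp_pos (-2 * cst^2 * Real.sqrt n)]
  -- wrap up in ENNReal
  have hsetB : {ω | 1 + ∑ i ∈ Finset.range (n - 1), Y i ω ≤ 0}
      = {ω | (∑ i ∈ Finset.range k, Y i) ω ≤ -1} := by
    ext ω
    simp only [Set.mem_setOf_eq, Finset.sum_apply, hk_def]
    constructor <;> intro h <;> linarith
  have hBm : MeasurableSet {ω | 1 + ∑ i ∈ Finset.range (n - 1), Y i ω ≤ 0} := by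
    have hsum : Measurable (fun ω => ∑ i ∈ Finset.range (n - 1), Y i ω) :=
      Finset.measurable_sum _ (fun i _ => hmeas i)
    exact measurableSet_le (measurable_const.add hsum) measurable_const
  have hcompl : {ω | 0 < 1 + ∑ i ∈ Finset.range (n - 1), Y i ω}
      = {ω | 1 + ∑ i ∈ Finset.range (n - 1), Y i ω ≤ 0}ᶜ := by
    ext ω
    simp [not_le]
  rw [ge_iff_le, hcompl, measure_compl hBm (measure_ne_top _ _), measure_univ]
  have hμB : μ {ω | 1 + ∑ i ∈ Finset.range (n - 1), Y i ω ≤ 0}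
      ≤ ENNReal.ofReal (2 * Real.exp (-2 * cst^2 * Real.sqrt n)) := by
    rw [← ENNReal.ofReal_toReal
      (measure_ne_top μ {ω | 1 + ∑ i ∈ Finset.range (n - 1), Y i ω ≤ 0})]
    apply ENNReal.ofReal_le_ofReal
    rw [hsetB]
    exact hreal
  calc ENNReal.ofReal (1 - 2 * Real.exp (-2 * cst^2 * Real.sqrt n))
      = 1 - ENNReal.ofReal (2 * Real.exp (-2 * cst^2 * Real.sqrt n)) := by
        rw [ENNReal.ofReal_sub _ (by positivity), ENNReal.ofReal_one]
    _ ≤ 1 - μ {ω | 1 + ∑ i ∈ Finset.range (n - 1), Y i ω ≤ 0} :=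
        tsub_le_tsub_left hμB 1
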